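/- arXiv:2206.01299 — 3 statements merged into one kernel-verified Lean document; each statement's English description precedes it below -/
import Mathlib

section
/- (One-step recursion for the message error) For every 2 ≤ j ≤ T, the message errors of the delta-compression scheme satisfy ‖δ_j‖² ≤ 2 c_Q² ℓ_a² ‖x_j − x_{j−1}‖² + 2 c_Q² ‖δ_{j−1}‖², and also δ_1 = 0. -/
/-- **One-step recursion for the message error** in the delta-compression scheme:
with `m 1 = a (x 1)` and `m j = m (j-1) + Q (a (x j) - m (j-1))`, the message errors
`δ j = a (x j) - m j` satisfy `δ 1 = 0` and, for `2 ≤ j ≤ T`,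
`‖δ j‖² ≤ 2 c_Q² ℓ_a² ‖x j - x (j-1)‖² + 2 c_Q² ‖δ (j-1)‖²`. -/
theorem delta_compression_one_step_recursion {d k : ℕ} (la cQ : ℝ) (hcQ : 0 ≤ cQ)
    (a : EuclideanSpace ℝ (Fin d) → EuclideanSpace ℝ (Fin k))
    (ha : ∀ y z, ‖a y - a z‖ ≤ la * ‖y - z‖)
    (Q : EuclideanSpace ℝ (Fin k) → EuclideanSpace ℝ (Fin k))
    (hQ : ∀ z, ‖z - Q z‖ ≤ cQ * ‖z‖)
    (T : ℕ) (x : ℕ → EuclideanSpace ℝ (Fin d))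
    (m δ : ℕ → EuclideanSpace ℝ (Fin k))
    (hm1 : m 1 = a (x 1))
    (hm : ∀ j, 2 ≤ j → j ≤ T → m j = m (j - 1) + Q (a (x j) - m (j - 1)))
    (hδ : ∀ j, δ j = a (x j) - m j) :
    δ 1 = 0 ∧ ∀ j, 2 ≤ j → j ≤ T →
      ‖δ j‖ ^ 2 ≤ 2 * cQ ^ 2 * la ^ 2 * ‖x j - x (j - 1)‖ ^ 2 + 2 * cQ ^ 2 * ‖δ (j - 1)‖ ^ 2 := by
  refine ⟨by rw [hδ, hm1, sub_self], ?_⟩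
  intro j h2 hT
  set z := a (x j) - m (j - 1) with hz
  have hδj : δ j = z - Q z := by
    rw [hδ, hm j h2 hT, hz]; abel
  have key : ‖δ j‖ ≤ cQ * ‖z‖ := by rw [hδj]; exact hQ z
  set u := la * ‖x j - x (j - 1)‖ with hu
  have hzu : ‖z‖ ≤ u + ‖δ (j - 1)‖ := by
    have : z = (a (x j) - a (x (j - 1))) + δ (j - 1) := by rw [hz, hδ]; abel
    calc ‖z‖ ≤ ‖a (x j) - a (x (j - 1))‖ + ‖δ (j - 1)‖ := by rw [this]; exact norm_add_le _ _
      _ ≤ u + ‖δ (j - 1)‖ := by have := ha (x j) (x (j - 1)); linarith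
  have hu0 : 0 ≤ u := le_trans (norm_nonneg _) (ha (x j) (x (j - 1)))
  have h1 : ‖δ j‖ ≤ cQ * (u + ‖δ (j - 1)‖) :=
    le_trans key (by nlinarith [norm_nonneg z])
  have h2' : ‖δ j‖ ^ 2 ≤ cQ ^ 2 * (u + ‖δ (j - 1)‖) ^ 2 := by
    nlinarith [norm_nonneg (δ j), norm_nonneg (δ (j - 1))]
  have : cQ ^ 2 * (u + ‖δ (j - 1)‖) ^ 2 ≤ 2 * cQ ^ 2 * u ^ 2 + 2 * cQ ^ 2 * ‖δ (j - 1)‖ ^ 2 := by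
    nlinarith [sq_nonneg (u - ‖δ (j - 1)‖), sq_nonneg cQ]
  have hfin : 2 * cQ ^ 2 * u ^ 2 = 2 * cQ ^ 2 * la ^ 2 * ‖x j - x (j - 1)‖ ^ 2 := by
    rw [hu]; ring
  linarith
end

section
/- (Accumulated message-error bound for delta compression) The message errors of the delta-compression scheme satisfy (1 − 2 c_Q²) Σ_{j=1}^{T} ‖δ_j‖² ≤ 2 c_Q² ℓ_a² Σ_{j=2}^{T} ‖x_j − x_{j−1}‖². -/
/-- **Accumulated message-error bound for delta compression**:
with `m 1 = a (x 1)` and `m j = m (j-1) + Q (a (x j) - m (j-1))`, the message errors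
`δ j = a (x j) - m j` satisfy
`(1 - 2 c_Q²) ∑_{j=1}^{T} ‖δ j‖² ≤ 2 c_Q² ℓ_a² ∑_{j=2}^{T} ‖x j - x (j-1)‖²`. -/
theorem delta_compression_accumulated_error_bound {d k : ℕ} (la cQ : ℝ) (hcQ : 0 ≤ cQ)
    (a : EuclideanSpace ℝ (Fin d) → EuclideanSpace ℝ (Fin k))
    (ha : ∀ y z, ‖a y - a z‖ ≤ la * ‖y - z‖)
    (Q : EuclideanSpace ℝ (Fin k) → EuclideanSpace ℝ (Fin k))
    (hQ : ∀ z, ‖z - Q z‖ ≤ cQ * ‖z‖)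
    (T : ℕ) (x : ℕ → EuclideanSpace ℝ (Fin d))
    (m δ : ℕ → EuclideanSpace ℝ (Fin k))
    (hm1 : m 1 = a (x 1))
    (hm : ∀ j, 2 ≤ j → j ≤ T → m j = m (j - 1) + Q (a (x j) - m (j - 1)))
    (hδ : ∀ j, δ j = a (x j) - m j) :
    (1 - 2 * cQ ^ 2) * ∑ j ∈ Finset.Icc 1 T, ‖δ j‖ ^ 2
      ≤ 2 * cQ ^ 2 * la ^ 2 * ∑ j ∈ Finset.Icc 2 T, ‖x j - x (j - 1)‖ ^ 2 := by
  -- trivial case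
  rcases Nat.lt_or_ge T 1 with hT | hT
  · interval_cases T
    simp [hδ, hm1]
  -- δ 1 = 0
  have hδ1 : ‖δ 1‖ = 0 := by simp [hδ, hm1]
  -- pointwise recursive bound
  have key : ∀ j ∈ Finset.Icc 2 T, ‖δ j‖ ^ 2 ≤
      2 * cQ ^ 2 * la ^ 2 * ‖x j - x (j - 1)‖ ^ 2 + 2 * cQ ^ 2 * ‖δ (j - 1)‖ ^ 2 := by
    intro j hj
    rw [Finset.mem_Icc] at hj
    have h1 : δ j = (a (x j) - m (j - 1)) - Q (a (x j) - m (j - 1)) := by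
      rw [hδ, hm j hj.1 hj.2]; abel
    have h2 : ‖δ j‖ ≤ cQ * ‖a (x j) - m (j - 1)‖ := by rw [h1]; exact hQ _
    have h3 : a (x j) - m (j - 1) = (a (x j) - a (x (j - 1))) + δ (j - 1) := by
      rw [hδ]; abel
    have h4 : ‖a (x j) - m (j - 1)‖ ≤ la * ‖x j - x (j - 1)‖ + ‖δ (j - 1)‖ := by
      rw [h3]
      calc ‖(a (x j) - a (x (j - 1))) + δ (j - 1)‖
          ≤ ‖a (x j) - a (x (j - 1))‖ + ‖δ (j - 1)‖ := norm_add_le _ _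
        _ ≤ la * ‖x j - x (j - 1)‖ + ‖δ (j - 1)‖ := by
            have := ha (x j) (x (j - 1)); linarith
    have h5 : ‖δ j‖ ≤ cQ * (la * ‖x j - x (j - 1)‖ + ‖δ (j - 1)‖) := by
      calc ‖δ j‖ ≤ cQ * ‖a (x j) - m (j - 1)‖ := h2
        _ ≤ cQ * (la * ‖x j - x (j - 1)‖ + ‖δ (j - 1)‖) := by
            exact mul_le_mul_of_nonneg_left h4 hcQ
    have hn1 : (0:ℝ) ≤ ‖δ j‖ := norm_nonneg _
    have hn2 : (0:ℝ) ≤ la * ‖x j - x (j - 1)‖ := by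
      have := ha (x j) (x (j - 1)); have := norm_nonneg (a (x j) - a (x (j - 1))); linarith
    have hn3 : (0:ℝ) ≤ ‖δ (j - 1)‖ := norm_nonneg _
    nlinarith [sq_nonneg (la * ‖x j - x (j - 1)‖ - ‖δ (j - 1)‖), sq_nonneg cQ,
      mul_le_mul h5 h5 hn1 (by positivity)]
  -- sum the recursion
  have hsum := Finset.sum_le_sum key
  rw [Finset.sum_add_distrib, ← Finset.mul_sum, ← Finset.mul_sum] at hsum
  -- reindex the shifted sum
  have hre : ∑ j ∈ Finset.Icc 2 T, ‖δ (j - 1)‖ ^ 2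
      = ∑ j ∈ Finset.Icc 1 (T - 1), ‖δ j‖ ^ 2 := by
    rw [show Finset.Icc 2 T = (Finset.Icc 1 (T - 1)).map (addRightEmbedding 1) from by
      rw [Finset.map_add_right_Icc]
      congr 1
      omega]
    rw [Finset.sum_map]
    simp [addRightEmbedding]
  have hsub : ∑ j ∈ Finset.Icc 1 (T - 1), ‖δ j‖ ^ 2 ≤ ∑ j ∈ Finset.Icc 1 T, ‖δ j‖ ^ 2 :=
    Finset.sum_le_sum_of_subset_of_nonneg
      (Finset.Icc_subset_Icc_right (by omega)) (fun i _ _ => by positivity)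
  -- split off the first term
  have hsplit : ∑ j ∈ Finset.Icc 1 T, ‖δ j‖ ^ 2 = ∑ j ∈ Finset.Icc 2 T, ‖δ j‖ ^ 2 := by
    rw [show Finset.Icc 1 T = insert 1 (Finset.Icc 2 T) from by
      ext i
      simp only [Finset.mem_Icc, Finset.mem_insert]
      omega]
    rw [Finset.sum_insert (by simp), hδ1]
    ring
  have hcQsq : (0:ℝ) ≤ 2 * cQ ^ 2 := by positivity
  have := mul_le_mul_of_nonneg_left hsub hcQsq
  rw [hre] at hsum
  linarith [hsum, hsplit]
end

section
/- (Lemma GenOne, gradient-error bounds in the K-machine chain) For every sample ξ and model x: (i) ‖Δ^{(Q,i)}_ξ(x)‖ ≤ c_Q C_{a_i} C_{f∘a_K∘…∘a_{i+1}} for every i = 1,…,K−1, where the realized quantized backward gradient v satisfies ‖v − z‖ ≤ c_Q‖z‖ for the true backward gradient z; (ii) ‖Δ^{(i)}_ξ(x)‖ ≤ C_{a_i} L_{f∘a_K∘…∘a_{i+1}} ‖δ^{(i)}_ξ(x)‖ + C_{f∘a_K∘…∘a_{i+1}} L_{a_i} ‖δ^{(i−1)}_ξ(x)‖ for every i = 1,…,K−1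 (with δ^{(0)} = 0); (iii) ‖Δ^{(K)}_ξ(x)‖ ≤ L_{f∘a_K} ‖δ^{(K−1)}_ξ(x)‖; and consequently (iv) the concatenated quantization error Δ^{(Q)}_ξ = (Δ^{(Q,1)}_ξ, …, Δ^{(Q,K−1)}_ξ) satisfies ‖Δ^{(Q)}_ξ(x)‖ ≤ c_Q C̃, where C̃ = √(Σ_{i=1}^{K−1} C_{a_i}² C_{f∘a_K∘…∘a_{i+1}}²). -/
set_option synthInstance.maxHeartbeats 1000000
set_option maxHeartbeats 1000000

noncomputable section

/-- `ℝⁿ` with the Euclidean norm. -/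
abbrev Euc (n : ℕ) : Type := EuclideanSpace ℝ (Fin n)

lemma grad_comp_affine' {E F : Type*}
    [NormedAddCommGroup E] [InnerProductSpace ℝ E] [CompleteSpace E]
    [NormedAddCommGroup F] [InnerProductSpace ℝ F] [CompleteSpace F]
    (f : F → ℝ) (ι : E →L[ℝ] F) (c : F) (w : E)
    (hf : DifferentiableAt ℝ f (ι w + c)) :
    gradient (fun w => f (ι w + c)) w
      = ContinuousLinearMap.adjoint ι (gradient f (ι w + c)) := by
  have h1 : HasFDerivAt (fun w => ι w + c) (ι : E →L[ℝ] F) w :=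
    ι.hasFDerivAt.add_const c
  have h2 : HasFDerivAt (fun w => f (ι w + c)) ((fderiv ℝ f (ι w + c)).comp ι) w :=
    hf.hasFDerivAt.comp w h1
  apply ext_inner_right ℝ
  intro u
  rw [gradient, InnerProductSpace.toDual_symm_apply, h2.fderiv,
    ContinuousLinearMap.adjoint_inner_left]
  rw [gradient, InnerProductSpace.toDual_symm_apply]
  rfl

lemma adjoint_apply_norm_le' {E F : Type*}
    [NormedAddCommGroup E] [InnerProductSpace ℝ E] [CompleteSpace E]
    [NormedAddCommGroup F] [InnerProductSpace ℝ F] [CompleteSpace F]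
    [FiniteDimensional ℝ E] [FiniteDimensional ℝ F]
    (A : E →L[ℝ] F) (u : F) : ‖ContinuousLinearMap.adjoint A u‖ ≤ ‖A‖ * ‖u‖ := by
  calc ‖ContinuousLinearMap.adjoint A u‖ ≤ ‖ContinuousLinearMap.adjoint A‖ * ‖u‖ :=
      (ContinuousLinearMap.adjoint A).le_opNorm u
    _ = ‖A‖ * ‖u‖ := by rw [ContinuousLinearMap.adjoint.norm_map]

def inlL' (E F : Type*) [NormedAddCommGroup E] [InnerProductSpace ℝ E]
    [NormedAddCommGroup F] [InnerProductSpace ℝ F] [FiniteDimensional ℝ E] :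
    E →L[ℝ] WithLp 2 (E × F) :=
  LinearMap.toContinuousLinearMap
    ((WithLp.linearEquiv 2 ℝ (E × F)).symm.toLinearMap.comp (LinearMap.inl ℝ E F))

def inrL' (E F : Type*) [NormedAddCommGroup E] [InnerProductSpace ℝ E]
    [NormedAddCommGroup F] [InnerProductSpace ℝ F] [FiniteDimensional ℝ F] :
    F →L[ℝ] WithLp 2 (E × F) :=
  LinearMap.toContinuousLinearMap
    ((WithLp.linearEquiv 2 ℝ (E × F)).symm.toLinearMap.comp (LinearMap.inr ℝ E F))

lemma inlL'_apply (E F : Type*) [NormedAddCommGroup E] [InnerProductSpace ℝ E]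
    [NormedAddCommGroup F] [InnerProductSpace ℝ F] [FiniteDimensional ℝ E] (u : E) :
    inlL' E F u = (WithLp.equiv 2 (E × F)).symm (u, 0) := rfl

lemma norm_inlL' (E F : Type*) [NormedAddCommGroup E] [InnerProductSpace ℝ E]
    [NormedAddCommGroup F] [InnerProductSpace ℝ F] [FiniteDimensional ℝ E] (u : E) :
    ‖inlL' E F u‖ = ‖u‖ := WithLp.norm_toLp_fst 2 E F u

lemma norm_inrL' (E F : Type*) [NormedAddCommGroup E] [InnerProductSpace ℝ E]
    [NormedAddCommGroup F] [InnerProductSpace ℝ F] [FiniteDimensional ℝ F] (u : F) :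
    ‖inrL' E F u‖ = ‖u‖ := WithLp.norm_toLp_snd 2 E F u

def sinL' {ι : Type*} [Fintype ι] [DecidableEq ι] (β : ι → Type*)
    [∀ i, NormedAddCommGroup (β i)] [∀ i, InnerProductSpace ℝ (β i)]
    [∀ i, FiniteDimensional ℝ (β i)] (i : ι) : β i →L[ℝ] PiLp 2 β :=
  LinearMap.toContinuousLinearMap
    ((WithLp.linearEquiv 2 ℝ (∀ i, β i)).symm.toLinearMap.comp (LinearMap.single ℝ β i))

lemma sinL'_apply {ι : Type*} [Fintype ι] [DecidableEq ι] (β : ι → Type*)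
    [∀ i, NormedAddCommGroup (β i)] [∀ i, InnerProductSpace ℝ (β i)]
    [∀ i, FiniteDimensional ℝ (β i)] (i : ι) (u : β i) :
    sinL' β i u = (WithLp.equiv 2 (∀ i, β i)).symm (Pi.single i u) := rfl

lemma norm_sinL' {ι : Type*} [Fintype ι] [DecidableEq ι] (β : ι → Type*)
    [∀ i, NormedAddCommGroup (β i)] [∀ i, InnerProductSpace ℝ (β i)]
    [∀ i, FiniteDimensional ℝ (β i)] (i : ι) (u : β i) :
    ‖sinL' β i u‖ = ‖u‖ := PiLp.norm_toLp_single 2 β i u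

/-- **Lemma GenOne: gradient-error bounds in the K-machine chain.**
Machines are indexed by `j = 0, …, K-1` (machine `j` is the paper's machine `j+1`);
activation levels by `i = 0, …, K-1` (level `0` is the raw sample, level `i` is the paper's
`ā⁽ⁱ⁾`).  Machine `j ≤ K-2` computes `a j : ℝ^{kdim j} → ℝ^{ddim j} → ℝ^{kdim (j+1)}`; the
last machine carries the loss `Ftop` (the paper's `f ∘ a_K`).  `φ i` (for `1 ≤ i ≤ K-1`)
is the paper's tail composition `f ∘ a_K ∘ ⋯ ∘ a_{i+1}`, as a function of the level-`i`
activation and the full model.  With messages `msg` in place of the true activations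
`abar`, message errors `δ⁽ⁱ⁾ = abar i - msg i`, and gradient errors `Δ⁽ⁱ⁾`, `Δ^{(Q,i)}`,
`Δ⁽ᴷ⁾` of the AC-SGD algorithm, one has (i) `‖Δ^{(Q,i)}‖ ≤ c_Q C_{a_i} C_{φ_i}`,
(ii) `‖Δ⁽ⁱ⁾‖ ≤ C_{a_i} L_{φ_i} ‖δ⁽ⁱ⁾‖ + C_{φ_i} L_{a_i} ‖δ⁽ⁱ⁻¹⁾‖`,
(iii) `‖Δ⁽ᴷ⁾‖ ≤ L_{f∘a_K} ‖δ⁽ᴷ⁻¹⁾‖`, and (iv) `‖Δ^{(Q)}‖ ≤ c_Q C̃` for the concatenated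
quantization error, `C̃ = √(∑ C_{a_i}² C_{φ_i}²)`. -/
theorem chain_gradient_error_bounds
    (K : ℕ) (hK : 2 ≤ K)
    -- dimensions of the activation spaces (level 0 = input) and of the weight spaces
    (kdim ddim : ℕ → ℕ)
    -- the sub-networks and the final loss (`Ftop` is the paper's `f ∘ a_K`)
    (a : (j : ℕ) → Euc (kdim j) → Euc (ddim j) → Euc (kdim (j + 1)))
    (Ftop : Euc (kdim (K - 1)) → Euc (ddim (K - 1)) → ℝ)
    -- the tail compositions `φ i = f ∘ a_K ∘ ⋯ ∘ a_{i+1}`, as functions of the level-`i`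
    -- activation and the full model
    (φ : (i : ℕ) → WithLp 2 (Euc (kdim i) × PiLp 2 (fun j : Fin K => Euc (ddim j))) → ℝ)
    -- the model
    (x : PiLp 2 (fun j : Fin K => Euc (ddim j)))
    (hφtop : ∀ (z : Euc (kdim (K - 1)))
        (xx : PiLp 2 (fun j : Fin K => Euc (ddim j))),
      φ (K - 1) ((WithLp.equiv 2 _).symm (z, xx)) = Ftop z (xx ⟨K - 1, by omega⟩))
    (hφrec : ∀ i (hi1 : 1 ≤ i) (hi2 : i ≤ K - 2),
      ∀ (z : Euc (kdim i)) (xx : PiLp 2 (fun j : Fin K => Euc (ddim j))),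
      φ i ((WithLp.equiv 2 _).symm (z, xx)) =
        φ (i + 1) ((WithLp.equiv 2 _).symm (a i z (xx ⟨i, by omega⟩), xx)))
    -- constants (indexed so that `Ca j`, `La j`, `la j` refer to machine `j`, i.e. the
    -- paper's `a_{j+1}`, and `Lφ i`, `Cφ i` to the paper's `φ_i`)
    (Ca La la Lφ Cφ : ℕ → ℝ) (cQ : ℝ) (hcQ : 0 ≤ cQ)
    -- Assumption GA1
    (hφdiff : ∀ i (hi1 : 1 ≤ i) (hi2 : i ≤ K - 1), Differentiable ℝ (φ i))
    (hφLip : ∀ i (hi1 : 1 ≤ i) (hi2 : i ≤ K - 1),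
      ∀ p q, ‖gradient (φ i) p - gradient (φ i) q‖ ≤ Lφ i * ‖p - q‖)
    (hφBdd : ∀ i (hi1 : 1 ≤ i) (hi2 : i ≤ K - 1), ∀ p, ‖gradient (φ i) p‖ ≤ Cφ i)
    (hadiff1 : ∀ j (hj : j ≤ K - 2), ∀ z, Differentiable ℝ (a j z))
    (hadiff2 : ∀ j (hj : j ≤ K - 2), ∀ y, Differentiable ℝ (fun z => a j z y))
    (haLip : ∀ j (hj : j ≤ K - 2), ∀ z z' y y',
      ‖a j z y - a j z' y'‖ ^ 2 ≤ (la j) ^ 2 * (‖z - z'‖ ^ 2 + ‖y - y'‖ ^ 2))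
    (hJacW : ∀ j (hj : j ≤ K - 2), ∀ z y, ‖fderiv ℝ (a j z) y‖ ≤ Ca j)
    (hJacA : ∀ j (hj : j ≤ K - 2), ∀ z y, ‖fderiv ℝ (fun z' => a j z' y) z‖ ≤ Ca j)
    (hJacLip : ∀ j (hj : j ≤ K - 2), ∀ z z' y,
      ‖fderiv ℝ (a j z) y - fderiv ℝ (a j z') y‖ ≤ La j * ‖z - z'‖)
    -- true activations along the chain, and the (buffered) messages
    (abar msg : (i : ℕ) → Euc (kdim i))
    (habar : ∀ i (hi : i ≤ K - 2), abar (i + 1) = a i (abar i) (x ⟨i, by omega⟩))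
    (hmsg0 : msg 0 = abar 0)
    -- the realized quantized backward gradients
    (v : (j : ℕ) → Euc (kdim (j + 1)))
    (hv : ∀ j (hj : j ≤ K - 2),
      ‖v j - gradient (fun w => φ (j + 1) ((WithLp.equiv 2 _).symm (w, x))) (msg (j + 1))‖
        ≤ cQ * ‖gradient (fun w => φ (j + 1) ((WithLp.equiv 2 _).symm (w, x))) (msg (j + 1))‖)
    -- the gradient errors
    (Δ ΔQ : (j : ℕ) → Euc (ddim j))
    (hΔ : ∀ j (hj : j ≤ K - 2), Δ j =
      (fderiv ℝ (a j (msg j)) (x ⟨j, by omega⟩)).adjoint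
        (gradient (fun w => φ (j + 1) ((WithLp.equiv 2 _).symm (w, x))) (msg (j + 1)))
      - (fderiv ℝ (a j (abar j)) (x ⟨j, by omega⟩)).adjoint
        (gradient (fun w => φ (j + 1) ((WithLp.equiv 2 _).symm (w, x))) (abar (j + 1))))
    (hΔK : Δ (K - 1) =
      gradient (Ftop (msg (K - 1))) (x ⟨K - 1, by omega⟩)
      - gradient (Ftop (abar (K - 1))) (x ⟨K - 1, by omega⟩))
    (hΔQ : ∀ j (hj : j ≤ K - 2), ΔQ j =
      (fderiv ℝ (a j (msg j)) (x ⟨j, by omega⟩)).adjoint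
        (v j - gradient (fun w => φ (j + 1) ((WithLp.equiv 2 _).symm (w, x))) (msg (j + 1)))) :
    (∀ j, j ≤ K - 2 → ‖ΔQ j‖ ≤ cQ * Ca j * Cφ (j + 1)) ∧
    (∀ j, j ≤ K - 2 → ‖Δ j‖ ≤
      Ca j * Lφ (j + 1) * ‖abar (j + 1) - msg (j + 1)‖
        + Cφ (j + 1) * La j * ‖abar j - msg j‖) ∧
    ‖Δ (K - 1)‖ ≤ Lφ (K - 1) * ‖abar (K - 1) - msg (K - 1)‖ ∧
    Real.sqrt (∑ j ∈ Finset.range (K - 1), ‖ΔQ j‖ ^ 2)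
      ≤ cQ * Real.sqrt (∑ j ∈ Finset.range (K - 1), (Ca j) ^ 2 * (Cφ (j + 1)) ^ 2) := by
  
  classical
  have hK1 : 1 ≤ K - 1 := by omega
  -- first-slot embedding
  let ι : (i : ℕ) → Euc (kdim i) →L[ℝ]
      WithLp 2 (Euc (kdim i) × PiLp 2 (fun j : Fin K => Euc (ddim j))) :=
    fun i => inlL' _ _
  have hιap : ∀ i (u : Euc (kdim i)),
      ι i u = (WithLp.equiv 2 (Euc (kdim i) × PiLp 2 (fun j : Fin K => Euc (ddim j)))).symm (u, 0) :=
    fun i u => rfl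
  have hιn : ∀ i (u : Euc (kdim i)), ‖ι i u‖ = ‖u‖ := fun i u => norm_inlL' _ _ u
  have hι1 : ∀ i, ‖ι i‖ ≤ 1 := fun i =>
    ContinuousLinearMap.opNorm_le_bound _ zero_le_one fun u => by rw [hιn, one_mul]
  have hsplit : ∀ i (w : Euc (kdim i)),
      (WithLp.equiv 2 (Euc (kdim i) × PiLp 2 (fun j : Fin K => Euc (ddim j)))).symm (w, x)
        = ι i w + (WithLp.equiv 2 _).symm (0, x) := by
    intro i w
    rw [hιap]; simp only [WithLp.equiv_symm_apply]; rw [← WithLp.toLp_add]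
    simp
  have hqsub : ∀ i (w w' : Euc (kdim i)),
      (WithLp.equiv 2 (Euc (kdim i) × PiLp 2 (fun j : Fin K => Euc (ddim j)))).symm (w, x)
        - (WithLp.equiv 2 _).symm (w', x) = ι i (w - w') := by
    intro i w w'
    rw [hιap]; simp only [WithLp.equiv_symm_apply]; rw [← WithLp.toLp_sub]
    congr 1
    simp [Prod.mk_sub_mk, sub_self]
  -- gradient formula for the partial maps
  have hgrad : ∀ i, 1 ≤ i → i ≤ K - 1 → ∀ w : Euc (kdim i),
      gradient (fun w => φ i ((WithLp.equiv 2 _).symm (w, x))) w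
        = ContinuousLinearMap.adjoint (ι i)
            (gradient (φ i) ((WithLp.equiv 2 _).symm (w, x))) := by
    intro i h1 h2 w
    have hfun : (fun w : Euc (kdim i) => φ i ((WithLp.equiv 2 _).symm (w, x)))
        = fun w => φ i (ι i w + (WithLp.equiv 2 _).symm (0, x)) :=
      funext fun w => by rw [hsplit]
    rw [hfun, grad_comp_affine' _ _ _ _ ((hφdiff i h1 h2) _), ← hsplit]
  have hgb : ∀ i, 1 ≤ i → i ≤ K - 1 → ∀ w : Euc (kdim i),
      ‖gradient (fun w => φ i ((WithLp.equiv 2 _).symm (w, x))) w‖ ≤ Cφ i := by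
    intro i h1 h2 w
    rw [hgrad i h1 h2 w]
    calc ‖ContinuousLinearMap.adjoint (ι i)
          (gradient (φ i) ((WithLp.equiv 2 _).symm (w, x)))‖
        ≤ ‖ι i‖ * ‖gradient (φ i) ((WithLp.equiv 2 _).symm (w, x))‖ :=
          adjoint_apply_norm_le' _ _
      _ ≤ 1 * Cφ i := mul_le_mul (hι1 i) (hφBdd i h1 h2 _) (norm_nonneg _) zero_le_one
      _ = Cφ i := one_mul _
  have hglip : ∀ i, 1 ≤ i → i ≤ K - 1 → ∀ w w' : Euc (kdim i),
      ‖gradient (fun w => φ i ((WithLp.equiv 2 _).symm (w, x))) w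
        - gradient (fun w => φ i ((WithLp.equiv 2 _).symm (w, x))) w'‖
        ≤ Lφ i * ‖w - w'‖ := by
    intro i h1 h2 w w'
    rw [hgrad i h1 h2 w, hgrad i h1 h2 w', ← map_sub]
    have hpp : ‖((WithLp.equiv 2 (Euc (kdim i) × PiLp 2 (fun j : Fin K => Euc (ddim j)))).symm (w, x))
        - (WithLp.equiv 2 _).symm (w', x)‖ = ‖w - w'‖ := by
      rw [hqsub, hιn]
    calc ‖ContinuousLinearMap.adjoint (ι i)
          (gradient (φ i) ((WithLp.equiv 2 _).symm (w, x))
            - gradient (φ i) ((WithLp.equiv 2 _).symm (w', x)))‖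
        ≤ ‖ι i‖ * ‖gradient (φ i) ((WithLp.equiv 2 _).symm (w, x))
            - gradient (φ i) ((WithLp.equiv 2 _).symm (w', x))‖ := adjoint_apply_norm_le' _ _
      _ ≤ 1 * (Lφ i * ‖((WithLp.equiv 2 _).symm (w, x) :
            WithLp 2 (Euc (kdim i) × PiLp 2 (fun j : Fin K => Euc (ddim j))))
            - (WithLp.equiv 2 _).symm (w', x)‖) :=
          mul_le_mul (hι1 i) (hφLip i h1 h2 _ _) (norm_nonneg _) zero_le_one
      _ = Lφ i * ‖w - w'‖ := by rw [one_mul, hpp]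
  -- part (i)
  have part1 : ∀ j, j ≤ K - 2 → ‖ΔQ j‖ ≤ cQ * Ca j * Cφ (j + 1) := by
    intro j hj
    have h1 : 1 ≤ j + 1 := by omega
    have h2 : j + 1 ≤ K - 1 := by omega
    have hjK : j < K := by omega
    rw [hΔQ j hj]
    have hAm := hJacW j hj (msg j) (x ⟨j, hjK⟩)
    have hCa0 : 0 ≤ Ca j := le_trans (norm_nonneg _) hAm
    have hvb : ‖v j - gradient (fun w => φ (j + 1) ((WithLp.equiv 2 _).symm (w, x))) (msg (j + 1))‖
        ≤ cQ * Cφ (j + 1) :=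
      le_trans (hv j hj) (mul_le_mul_of_nonneg_left (hgb (j + 1) h1 h2 (msg (j + 1))) hcQ)
    refine le_trans (adjoint_apply_norm_le' _ _) ?_
    refine le_trans (mul_le_mul hAm hvb (norm_nonneg _) hCa0) (le_of_eq (by ring))
  -- part (ii)
  have part2 : ∀ j, j ≤ K - 2 → ‖Δ j‖ ≤
      Ca j * Lφ (j + 1) * ‖abar (j + 1) - msg (j + 1)‖
        + Cφ (j + 1) * La j * ‖abar j - msg j‖ := by
    intro j hj
    have h1 : 1 ≤ j + 1 := by omega
    have h2 : j + 1 ≤ K - 1 := by omega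
    have hjK : j < K := by omega
    rw [hΔ j hj]
    set Am := fderiv ℝ (a j (msg j)) (x ⟨j, hjK⟩) with hAmdef
    set Aa := fderiv ℝ (a j (abar j)) (x ⟨j, hjK⟩) with hAadef
    set gm := gradient (fun w => φ (j + 1) ((WithLp.equiv 2 _).symm (w, x))) (msg (j + 1)) with hgmdef
    set ga := gradient (fun w => φ (j + 1) ((WithLp.equiv 2 _).symm (w, x))) (abar (j + 1)) with hgadef
    have hdec : ContinuousLinearMap.adjoint Am gm - ContinuousLinearMap.adjoint Aa ga
        = ContinuousLinearMap.adjoint Am (gm - ga)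
          + ContinuousLinearMap.adjoint (Am - Aa) ga := by
      rw [map_sub (ContinuousLinearMap.adjoint (𝕜 := ℝ)) Am Aa, ContinuousLinearMap.sub_apply,
        map_sub]
      abel
    rw [hdec]
    have hAm := hJacW j hj (msg j) (x ⟨j, hjK⟩)
    have hCa0 : 0 ≤ Ca j := le_trans (norm_nonneg _) hAm
    have hgd : ‖gm - ga‖ ≤ Lφ (j + 1) * ‖abar (j + 1) - msg (j + 1)‖ := by
      have h := hglip (j + 1) h1 h2 (msg (j + 1)) (abar (j + 1))
      rwa [norm_sub_rev (msg (j + 1)) (abar (j + 1))] at h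
    have hJ2 : ‖Am - Aa‖ ≤ La j * ‖abar j - msg j‖ := by
      have h := hJacLip j hj (msg j) (abar j) (x ⟨j, hjK⟩)
      rwa [norm_sub_rev (msg j) (abar j)] at h
    have hga := hgb (j + 1) h1 h2 (abar (j + 1))
    calc ‖ContinuousLinearMap.adjoint Am (gm - ga)
          + ContinuousLinearMap.adjoint (Am - Aa) ga‖
        ≤ ‖ContinuousLinearMap.adjoint Am (gm - ga)‖
          + ‖ContinuousLinearMap.adjoint (Am - Aa) ga‖ := norm_add_le _ _
      _ ≤ ‖Am‖ * ‖gm - ga‖ + ‖Am - Aa‖ * ‖ga‖ :=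
          add_le_add (adjoint_apply_norm_le' _ _) (adjoint_apply_norm_le' _ _)
      _ ≤ Ca j * (Lφ (j + 1) * ‖abar (j + 1) - msg (j + 1)‖)
          + (La j * ‖abar j - msg j‖) * Cφ (j + 1) :=
          add_le_add
            (mul_le_mul hAm hgd (norm_nonneg _) hCa0)
            (mul_le_mul hJ2 hga (norm_nonneg _) (le_trans (norm_nonneg _) hJ2))
      _ = Ca j * Lφ (j + 1) * ‖abar (j + 1) - msg (j + 1)‖
          + Cφ (j + 1) * La j * ‖abar j - msg j‖ := by ring
  -- part (iii)
  have hKK : K - 1 < K := by omega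
  have part3 : ‖Δ (K - 1)‖ ≤ Lφ (K - 1) * ‖abar (K - 1) - msg (K - 1)‖ := by
    set iK : Fin K := ⟨K - 1, hKK⟩ with hiK
    let σ : Euc (ddim (K - 1)) →L[ℝ]
        WithLp 2 (Euc (kdim (K - 1)) × PiLp 2 (fun j : Fin K => Euc (ddim j))) :=
      (inrL' _ _).comp (sinL' (fun j : Fin K => Euc (ddim j)) iK)
    have hσn : ∀ u, ‖σ u‖ = ‖u‖ := fun u => by
      show ‖inrL' _ _ (sinL' (fun j : Fin K => Euc (ddim j)) iK u)‖ = ‖u‖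
      rw [norm_inrL', norm_sinL']
    have hσ1 : ‖σ‖ ≤ 1 :=
      ContinuousLinearMap.opNorm_le_bound _ zero_le_one fun u => by rw [hσn, one_mul]
    set S : Euc (ddim (K - 1)) → PiLp 2 (fun j : Fin K => Euc (ddim j)) :=
      fun u => sinL' (fun j : Fin K => Euc (ddim j)) iK u with hS
    have hpt : ∀ (z : Euc (kdim (K - 1))) (y : Euc (ddim (K - 1))),
        σ y + (WithLp.equiv 2 _).symm (z, x - S (x iK))
          = (WithLp.equiv 2 _).symm (z, S y + (x - S (x iK))) := by
      intro z y
      have h0 : σ y = (WithLp.equiv 2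
          (Euc (kdim (K - 1)) × PiLp 2 (fun j : Fin K => Euc (ddim j)))).symm (0, S y) := rfl
      rw [h0]; simp only [WithLp.equiv_symm_apply]; rw [← WithLp.toLp_add]
      simp
    have hcoord : ∀ y : Euc (ddim (K - 1)), (S y + (x - S (x iK))) iK = y := by
      intro y
      have h1 : ∀ u : Euc (ddim (K - 1)), (S u) iK = u := fun u => by
        show ((WithLp.equiv 2 (∀ j : Fin K, Euc (ddim j))).symm
          (Pi.single iK u)) iK = u
        simp only [WithLp.equiv_symm_apply, PiLp.toLp_apply, Pi.single_eq_same]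
      have : (S y + (x - S (x iK))) iK = (S y) iK + (x iK - (S (x iK)) iK) := rfl
      rw [this, h1, h1]
      abel
    have hrep : ∀ (z : Euc (kdim (K - 1))) (y : Euc (ddim (K - 1))),
        Ftop z y = φ (K - 1) (σ y + (WithLp.equiv 2 _).symm (z, x - S (x iK))) := by
      intro z y
      rw [hpt, hφtop]
      exact congrArg (Ftop z) (hcoord y).symm
    have hx0 : ∀ z : Euc (kdim (K - 1)),
        σ (x iK) + (WithLp.equiv 2 _).symm (z, x - S (x iK))
          = (WithLp.equiv 2 _).symm (z, x) := by
      intro z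
      rw [hpt]
      congr 1
      exact Prod.ext rfl (by rw [add_comm, sub_add_cancel])
    have hgradF : ∀ z : Euc (kdim (K - 1)),
        gradient (Ftop z) (x iK)
          = ContinuousLinearMap.adjoint σ
              (gradient (φ (K - 1)) ((WithLp.equiv 2 _).symm (z, x))) := by
      intro z
      have hfun : Ftop z = fun y => φ (K - 1)
          (σ y + (WithLp.equiv 2 _).symm (z, x - S (x iK))) := funext fun y => hrep z y
      rw [hfun, grad_comp_affine' _ _ _ _ ((hφdiff (K - 1) hK1 le_rfl) _), hx0]
    rw [hΔK]
    have hxeq : (x ⟨K - 1, by omega⟩ : Euc (ddim (K - 1))) = x iK := rfl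
    rw [hxeq, hgradF (msg (K - 1)), hgradF (abar (K - 1)), ← map_sub]
    have hps : ((WithLp.equiv 2 (Euc (kdim (K - 1)) × PiLp 2 (fun j : Fin K => Euc (ddim j)))).symm
          (msg (K - 1), x)) - (WithLp.equiv 2 _).symm (abar (K - 1), x)
        = ι (K - 1) (msg (K - 1) - abar (K - 1)) := hqsub (K - 1) _ _
    calc ‖ContinuousLinearMap.adjoint σ
          (gradient (φ (K - 1)) ((WithLp.equiv 2 _).symm (msg (K - 1), x))
            - gradient (φ (K - 1)) ((WithLp.equiv 2 _).symm (abar (K - 1), x)))‖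
        ≤ ‖σ‖ * ‖gradient (φ (K - 1)) ((WithLp.equiv 2 _).symm (msg (K - 1), x))
            - gradient (φ (K - 1)) ((WithLp.equiv 2 _).symm (abar (K - 1), x))‖ :=
          adjoint_apply_norm_le' _ _
      _ ≤ 1 * (Lφ (K - 1) * ‖((WithLp.equiv 2 _).symm (msg (K - 1), x) :
            WithLp 2 (Euc (kdim (K - 1)) × PiLp 2 (fun j : Fin K => Euc (ddim j))))
            - (WithLp.equiv 2 _).symm (abar (K - 1), x)‖) :=
          mul_le_mul hσ1 (hφLip (K - 1) hK1 le_rfl _ _) (norm_nonneg _) zero_le_one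
      _ = Lφ (K - 1) * ‖abar (K - 1) - msg (K - 1)‖ := by
          rw [one_mul, hps, hιn, norm_sub_rev]
  refine ⟨part1, part2, part3, ?_⟩
  -- part (iv)
  have hsum : ∀ j ∈ Finset.range (K - 1),
      ‖ΔQ j‖ ^ 2 ≤ cQ ^ 2 * ((Ca j) ^ 2 * (Cφ (j + 1)) ^ 2) := by
    intro j hjr
    have hj : j ≤ K - 2 := by
      have := Finset.mem_range.mp hjr; omega
    calc ‖ΔQ j‖ ^ 2 ≤ (cQ * Ca j * Cφ (j + 1)) ^ 2 :=
        pow_le_pow_left₀ (norm_nonneg _) (part1 j hj) 2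
      _ = cQ ^ 2 * ((Ca j) ^ 2 * (Cφ (j + 1)) ^ 2) := by ring
  calc Real.sqrt (∑ j ∈ Finset.range (K - 1), ‖ΔQ j‖ ^ 2)
      ≤ Real.sqrt (∑ j ∈ Finset.range (K - 1), cQ ^ 2 * ((Ca j) ^ 2 * (Cφ (j + 1)) ^ 2)) :=
        Real.sqrt_le_sqrt (Finset.sum_le_sum hsum)
    _ = Real.sqrt (cQ ^ 2) *
        Real.sqrt (∑ j ∈ Finset.range (K - 1), (Ca j) ^ 2 * (Cφ (j + 1)) ^ 2) := by
        rw [← Finset.mul_sum, Real.sqrt_mul (sq_nonneg cQ)]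
    _ = cQ * Real.sqrt (∑ j ∈ Finset.range (K - 1), (Ca j) ^ 2 * (Cφ (j + 1)) ^ 2) := by
        rw [Real.sqrt_sq hcQ]
end
end
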